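/- For the octonion multiplication on ℝ⁸, ‖x·y‖ = ‖x‖·‖y‖ for all x, y ∈ ℝ⁸, where ‖·‖ is the Euclidean norm. -/

import Mathlib

open Quaternion

/-- Octonion multiplication on `ℝ⁸ ≅ ℍ × ℍ`, via the Cayley–Dickson construction. -/
noncomputable def octMul (x y : ℍ × ℍ) : ℍ × ℍ :=
  (x.1 * y.1 - star y.2 * x.2, y.2 * x.1 + x.2 * star y.1)

/-- The Euclidean norm on the octonions `ℝ⁸ ≅ ℍ × ℍ`. -/
noncomputable def octNorm (x : ℍ × ℍ) : ℝ := Real.sqrt (‖x.1‖ ^ 2 + ‖x.2‖ ^ 2)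

lemma oct_key (a b c d : ℍ) :
    Quaternion.normSq (a * c - star d * b) + Quaternion.normSq (d * a + b * star c) =
      (Quaternion.normSq a + Quaternion.normSq b) *
        (Quaternion.normSq c + Quaternion.normSq d) := by
  simp only [Quaternion.normSq_def', Quaternion.re_mul, Quaternion.imI_mul,
    Quaternion.imJ_mul, Quaternion.imK_mul, Quaternion.re_sub, Quaternion.imI_sub,
    Quaternion.imJ_sub, Quaternion.imK_sub, Quaternion.re_add, Quaternion.imI_add,
    Quaternion.imJ_add, Quaternion.imK_add, Quaternion.re_star, Quaternion.imI_star,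
    Quaternion.imJ_star, Quaternion.imK_star]
  ring

/-- For octonion multiplication on `ℝ⁸`, `‖x·y‖ = ‖x‖·‖y‖` for all `x, y`. -/
theorem octonion_norm_mul (x y : ℍ × ℍ) : octNorm (octMul x y) = octNorm x * octNorm y := by
  unfold octNorm octMul
  rw [← Real.sqrt_mul (by positivity)]
  congr 1
  simpa only [sq, ← Quaternion.normSq_eq_norm_mul_self] using oct_key x.1 x.2 y.1 y.2
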